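/- Let n ≥ 2 and write det(xI − N) = x^{n+1} + b_1 x^n + … + b_n x + b_{n+1}. Then (−1)^n b_n = (343n + 441)/150 · [ ((2+√3)/7)^{n+1} + ((2−√3)/7)^{n+1} ] − (21/50) · [ ((2+√3)/7)^n + ((2−√3)/7)^n ] − (14√3/225) · [ ((2+√3)/7)^n − ((2−√3)/7)^n ]; equivalently, the sum of all n×n principal minors of N equals this quantity. -/
import Mathlib

open Polynomial Matrix

variable {R : Type*} [CommRing R]

def tri (a b c : ℕ → R) (k : ℕ) : Matrix (Fin k) (Fin k) R :=
  Matrix.of fun i j =>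
    if (i : ℕ) = (j : ℕ) then a i.val
    else if (i : ℕ) + 1 = (j : ℕ) then b i.val
    else if (j : ℕ) + 1 = (i : ℕ) then c j.val
    else 0

lemma tri_apply (a b c : ℕ → R) (k : ℕ) (i j : Fin k) :
    tri a b c k i j =
      if (i : ℕ) = (j : ℕ) then a i.val
      else if (i : ℕ) + 1 = (j : ℕ) then b i.val
      else if (j : ℕ) + 1 = (i : ℕ) then c j.val
      else 0 := rfl

lemma tri_apply_val (a b c : ℕ → R) (k : ℕ) (i j : Fin k) :
    tri a b c k i j =
      if (i : ℕ) = (j : ℕ) then a i.val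
      else if (i : ℕ) + 1 = (j : ℕ) then b i.val
      else if (j : ℕ) + 1 = (i : ℕ) then c j.val
      else 0 := rfl

/-- entries of `tri` depend only on the values of the indices. -/
lemma tri_congr_entry (a b c : ℕ → R) (k l : ℕ) (i j : Fin k) (i' j' : Fin l)
    (hi : (i : ℕ) = (i' : ℕ)) (hj : (j : ℕ) = (j' : ℕ)) :
    tri a b c k i j = tri a b c l i' j' := by
  rw [tri_apply, tri_apply, hi, hj]

lemma det_tri (a b c : ℕ → R) (k : ℕ) :
    (tri a b c (k+2)).det
      = a (k+1) * (tri a b c (k+1)).det - b k * c k * (tri a b c k).det := by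
  rw [show (k+2) = (k+1)+1 from rfl] at *
  rw [Matrix.det_succ_row _ (Fin.last (k+1)), Fin.sum_univ_castSucc, Fin.sum_univ_castSucc]
  have hz : ∀ j : Fin k,
      tri a b c (k+2) (Fin.last (k+1)) (j.castSucc.castSucc) = 0 := by
    intro j
    have hj : (j : ℕ) < k := j.isLt
    rw [tri_apply]
    simp only [Fin.val_last, Fin.coe_castSucc]
    rw [if_neg (by omega), if_neg (by omega), if_neg (by omega)]
  rw [Finset.sum_eq_zero (fun j _ => by rw [hz j, mul_zero, zero_mul]), zero_add]
  have e1 : tri a b c (k+2) (Fin.last (k+1)) ((Fin.last k).castSucc) = c k := by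
    rw [tri_apply]
    simp only [Fin.val_last, Fin.coe_castSucc]
    rw [if_neg (by omega), if_neg (by omega)]
    simp
  have e2 : tri a b c (k+2) (Fin.last (k+1)) (Fin.last (k+1)) = a (k+1) := by
    rw [tri_apply]
    simp only [Fin.val_last]
    simp
  have s1 : ((-1 : R)) ^ ((Fin.last (k+1) : ℕ) + ((Fin.last k).castSucc : ℕ)) = -1 := by
    simp only [Fin.val_last, Fin.coe_castSucc]
    exact Odd.neg_one_pow ⟨k, by omega⟩
  have s2 : ((-1 : R)) ^ ((Fin.last (k+1) : ℕ) + (Fin.last (k+1) : ℕ)) = 1 := by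
    simp only [Fin.val_last]
    exact Even.neg_one_pow ⟨k+1, by omega⟩
  have sub2 : (tri a b c (k+2)).submatrix (Fin.last (k+1)).succAbove (Fin.last (k+1)).succAbove
      = tri a b c (k+1) := by
    ext i j
    rw [Fin.succAbove_last, Matrix.submatrix_apply]
    exact tri_congr_entry a b c _ _ _ _ i j (Fin.coe_castSucc i) (Fin.coe_castSucc j)
  have hpivot : ∀ j : Fin (k+1), (((Fin.last k).castSucc).succAbove j : ℕ)
      = if (j : ℕ) < k then (j : ℕ) else (j : ℕ) + 1 := by
    intro j
    by_cases h : (j : ℕ) < k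
    · rw [if_pos h, Fin.succAbove_of_castSucc_lt _ _ (by
        simp only [Fin.lt_def, Fin.coe_castSucc]; exact h), Fin.coe_castSucc]
    · rw [if_neg h, Fin.succAbove_of_le_castSucc _ _ (by
        simp only [Fin.le_def, Fin.coe_castSucc]; omega), Fin.val_succ]
  have hrow : ∀ i : Fin (k+1), ((Fin.last (k+1)).succAbove i : ℕ) = (i : ℕ) := by
    intro i
    rw [Fin.succAbove_last, Fin.coe_castSucc]
  have sub1 : ((tri a b c (k+2)).submatrix (Fin.last (k+1)).succAbove
      ((Fin.last k).castSucc).succAbove).det = b k * (tri a b c k).det := by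
    rw [Matrix.det_succ_column _ (Fin.last k), Fin.sum_univ_castSucc]
    have hz2 : ∀ i : Fin k, (tri a b c (k+2)).submatrix (Fin.last (k+1)).succAbove
        ((Fin.last k).castSucc).succAbove (i.castSucc) (Fin.last k) = 0 := by
      intro i
      have hi : (i : ℕ) < k := i.isLt
      rw [Matrix.submatrix_apply, tri_apply]
      rw [hrow, hpivot]
      simp only [Fin.coe_castSucc, Fin.val_last]
      rw [if_neg (lt_irrefl k)]
      rw [if_neg (by omega), if_neg (by omega), if_neg (by omega)]
    rw [Finset.sum_eq_zero (fun i _ => by rw [hz2 i, mul_zero, zero_mul]), zero_add]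
    have e3 : (tri a b c (k+2)).submatrix (Fin.last (k+1)).succAbove
        ((Fin.last k).castSucc).succAbove (Fin.last k) (Fin.last k) = b k := by
      rw [Matrix.submatrix_apply, tri_apply, hrow, hpivot]
      simp only [Fin.val_last]
      rw [if_neg (lt_irrefl k)]
      rw [if_neg (by omega), if_pos rfl]
    have s3 : ((-1 : R)) ^ ((Fin.last k : ℕ) + (Fin.last k : ℕ)) = 1 := by
      simp only [Fin.val_last]
      exact Even.neg_one_pow ⟨k, by omega⟩
    have sub3 : (((tri a b c (k+2)).submatrix (Fin.last (k+1)).succAbove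
        ((Fin.last k).castSucc).succAbove).submatrix (Fin.last k).succAbove
        (Fin.last k).succAbove) = tri a b c k := by
      ext i j
      have hi : (i : ℕ) < k := i.isLt
      have hj : (j : ℕ) < k := j.isLt
      rw [Fin.succAbove_last, Matrix.submatrix_apply, Matrix.submatrix_apply]
      refine tri_congr_entry a b c _ _ _ _ i j ?_ ?_
      · simp
      · rw [hpivot]
        simp [hj]
    rw [e3, s3, sub3]
    ring
  rw [e1, e2, s1, s2, sub2, sub1]
  ring

/-- The tridiagonal matrix `N` (of size `(n+1) × (n+1)`). -/
noncomputable def Nmat (n : ℕ) : Matrix (Fin (n+1)) (Fin (n+1)) ℝ :=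
  Matrix.of fun i j =>
    if i = j then (if i.val = 0 ∨ i.val = n then 3/5 else 4/7)
    else if i.val + 1 = j.val ∨ j.val + 1 = i.val then
      (if min i.val j.val = 0 ∨ max i.val j.val = n then -(1/Real.sqrt 35) else -(1/7))
    else 0

noncomputable def aseq : ℕ → ℝ[X] := fun i => X - C (if i = 0 then 3/5 else 4/7)
noncomputable def bseq : ℕ → ℝ[X] := fun i => C (if i = 0 then (Real.sqrt 35)⁻¹ else 1/7)
noncomputable def aN (n : ℕ) : ℕ → ℝ[X] :=
  fun i => X - C (if i = 0 ∨ i = n then 3/5 else 4/7)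
noncomputable def bN (n : ℕ) : ℕ → ℝ[X] :=
  fun i => C (if i = 0 ∨ i + 1 = n then (Real.sqrt 35)⁻¹ else 1/7)

noncomputable def ee (k : ℕ) : ℝ[X] := (tri aseq bseq bseq k).det

lemma ee_def (k : ℕ) : ee k = (tri aseq bseq bseq k).det := rfl

lemma h35 : (Real.sqrt 35)⁻¹ * (Real.sqrt 35)⁻¹ = 1/35 := by
  rw [← mul_inv, Real.mul_self_sqrt (by norm_num)]
  norm_num

lemma ee_zero : ee 0 = 1 := Matrix.det_fin_zero

lemma ee_one : ee 1 = X - C (3/5) := by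
  rw [ee_def, Matrix.det_fin_one]
  rw [tri_apply]
  norm_num [aseq]

lemma ee_rec (k : ℕ) : ee (k+2) = aseq (k+1) * ee (k+1) - bseq k * bseq k * ee k :=
  det_tri aseq bseq bseq k

lemma ee_two : ee 2 = (X - C (4/7)) * (X - C (3/5)) - C (1/35) := by
  have h := ee_rec 0
  rw [ee_zero, ee_one] at h
  rw [h, show aseq 1 = X - C (4/7) from by simp [aseq],
    show bseq 0 = C ((Real.sqrt 35)⁻¹) from by simp [bseq], ← C_mul, h35]
  ring

lemma coeff0_XsubC_mul (r : ℝ) (p : ℝ[X]) : ((X - C r) * p).coeff 0 = -r * p.coeff 0 := by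
  rw [Polynomial.mul_coeff_zero]
  simp

lemma coeff1_XsubC_mul (r : ℝ) (p : ℝ[X]) :
    ((X - C r) * p).coeff 1 = p.coeff 0 - r * p.coeff 1 := by
  rw [sub_mul, Polynomial.coeff_sub, Polynomial.coeff_X_mul, Polynomial.coeff_C_mul]

lemma coeff0_rec (k : ℕ) :
    (ee (k+3)).coeff 0 = -(4/7) * (ee (k+2)).coeff 0 - 1/49 * (ee (k+1)).coeff 0 := by
  have h := ee_rec (k+1)
  rw [show aseq (k+2) = X - C (4/7) from by simp [aseq],
    show bseq (k+1) = C (1/7) from by simp [bseq]] at h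
  rw [show k+3 = k+1+2 from rfl, h, Polynomial.coeff_sub, coeff0_XsubC_mul, ← C_mul,
    Polynomial.coeff_C_mul]
  norm_num

lemma coeff1_rec (k : ℕ) :
    (ee (k+3)).coeff 1
      = (ee (k+2)).coeff 0 - 4/7 * (ee (k+2)).coeff 1 - 1/49 * (ee (k+1)).coeff 1 := by
  have h := ee_rec (k+1)
  rw [show aseq (k+2) = X - C (4/7) from by simp [aseq],
    show bseq (k+1) = C (1/7) from by simp [bseq]] at h
  rw [show k+3 = k+1+2 from rfl, h, Polynomial.coeff_sub, coeff1_XsubC_mul, ← C_mul,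
    Polynomial.coeff_C_mul]
  norm_num

noncomputable def f0 (k : ℕ) : ℝ :=
  (-1)^k * ((7/10 + 7*Real.sqrt 3/30) * ((2+Real.sqrt 3)/7)^k
          + (7/10 - 7*Real.sqrt 3/30) * ((2-Real.sqrt 3)/7)^k)

noncomputable def f1 (k : ℕ) : ℝ :=
  (-1)^(k+1) * ((-(7*Real.sqrt 3/36) + 49/60*(1+Real.sqrt 3)*(k:ℝ)) * ((2+Real.sqrt 3)/7)^k
          + ((7*Real.sqrt 3/36) + 49/60*(1-Real.sqrt 3)*(k:ℝ)) * ((2-Real.sqrt 3)/7)^k)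

lemma hs3 : Real.sqrt 3 ^ 2 = 3 := Real.sq_sqrt (by norm_num)

lemma hf01 : f0 1 = -(3/5) := by
  simp only [f0]
  linear_combination (-1/15 : ℝ) * hs3

lemma hf11 : f1 1 = 1 := by
  simp only [f1]
  push_cast
  linear_combination (8/45 : ℝ) * hs3

lemma hf02 : f0 2 = 11/35 := by
  simp only [f0]
  linear_combination (1/15 : ℝ) * hs3

lemma hf12 : f1 2 = -(41/35) := by
  simp only [f1]
  push_cast
  linear_combination (-19/63 : ℝ) * hs3

lemma b01 : (ee 1).coeff 0 = -(3/5) := by rw [ee_one]; simp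

lemma b11 : (ee 1).coeff 1 = 1 := by
  rw [ee_one]
  simp [Polynomial.coeff_sub]

lemma b02 : (ee 2).coeff 0 = 11/35 := by
  rw [ee_two, Polynomial.coeff_sub, Polynomial.mul_coeff_zero]
  simp
  norm_num

lemma b12 : (ee 2).coeff 1 = -(41/35) := by
  rw [ee_two, Polynomial.coeff_sub, coeff1_XsubC_mul]
  simp
  norm_num

lemma key (k : ℕ) :
    ((ee (k+1)).coeff 0 = f0 (k+1) ∧ (ee (k+1)).coeff 1 = f1 (k+1)) ∧
    ((ee (k+2)).coeff 0 = f0 (k+2) ∧ (ee (k+2)).coeff 1 = f1 (k+2)) := by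
  induction k with
  | zero =>
    exact ⟨⟨b01.trans hf01.symm, b11.trans hf11.symm⟩,
      ⟨b02.trans hf02.symm, b12.trans hf12.symm⟩⟩
  | succ k ih =>
    refine ⟨ih.2, ?_, ?_⟩
    · rw [show k+1+2 = k+3 from rfl, coeff0_rec k, ih.2.1, ih.1.1]
      simp only [f0, pow_succ]
      linear_combination (-1 : ℝ) * (((-1/245) * ((-1:ℝ)^k) * (((2+Real.sqrt 3)/7)^k + ((2-Real.sqrt 3)/7)^k))
        + (1/294) * Real.sqrt 3 * ((-1:ℝ)^k) * (((2-Real.sqrt 3)/7)^k - ((2+Real.sqrt 3)/7)^k)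
        + (-1/1470) * (Real.sqrt 3)^2 * ((-1:ℝ)^k)
            * (((2+Real.sqrt 3)/7)^k + ((2-Real.sqrt 3)/7)^k)) * hs3
    · rw [show k+1+2 = k+3 from rfl, coeff1_rec k, ih.2.1, ih.2.2, ih.1.2]
      simp only [f0, f1, pow_succ]
      push_cast
      linear_combination (-1 : ℝ) * (
          (1/42) * ((-1:ℝ)^k) * (((2-Real.sqrt 3)/7)^k + ((2+Real.sqrt 3)/7)^k)
        + (1/210) * ((-1:ℝ)^k) * (k:ℝ) * (((2-Real.sqrt 3)/7)^k + ((2+Real.sqrt 3)/7)^k)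
        + (221/8820) * Real.sqrt 3 * ((-1:ℝ)^k)
            * (((2+Real.sqrt 3)/7)^k - ((2-Real.sqrt 3)/7)^k)
        + (1/140) * Real.sqrt 3 * ((-1:ℝ)^k) * (k:ℝ)
            * (((2+Real.sqrt 3)/7)^k - ((2-Real.sqrt 3)/7)^k)
        + (29/4410) * (Real.sqrt 3)^2 * ((-1:ℝ)^k)
            * (((2-Real.sqrt 3)/7)^k + ((2+Real.sqrt 3)/7)^k)
        + (1/420) * (Real.sqrt 3)^2 * ((-1:ℝ)^k) * (k:ℝ)
            * (((2-Real.sqrt 3)/7)^k + ((2+Real.sqrt 3)/7)^k)) * hs3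

lemma charmatrix_Nmat (n : ℕ) :
    charmatrix (Nmat n) = tri (aN n) (bN n) (bN n) (n+1) := by
  ext i j
  by_cases h : i = j
  · subst h
    rw [Matrix.charmatrix_apply_eq, tri_apply, if_pos rfl]
    simp only [Nmat, Matrix.of_apply, if_pos rfl, if_true, aN]
  · have hv : (i : ℕ) ≠ (j : ℕ) := fun hv => h (Fin.ext hv)
    rw [Matrix.charmatrix_apply_ne _ _ _ h, tri_apply, if_neg hv]
    by_cases h1 : (i:ℕ)+1 = (j:ℕ)
    · rw [if_pos h1]
      by_cases hP : (i:ℕ) = 0 ∨ (i:ℕ)+1 = n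
      · have hE : Nmat n i j = -(1/Real.sqrt 35) := by
          simp only [Nmat, Matrix.of_apply]
          rw [if_neg h, if_pos (Or.inl h1), if_pos (by omega)]
        rw [hE, bN, if_pos hP, map_neg, neg_neg, one_div]
      · have hE : Nmat n i j = -(1/7) := by
          simp only [Nmat, Matrix.of_apply]
          rw [if_neg h, if_pos (Or.inl h1), if_neg (by omega)]
        rw [hE, bN, if_neg hP, map_neg, neg_neg]
    · rw [if_neg h1]
      by_cases h2 : (j:ℕ)+1 = (i:ℕ)
      · rw [if_pos h2]
        by_cases hP : (j:ℕ) = 0 ∨ (j:ℕ)+1 = n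
        · have hE : Nmat n i j = -(1/Real.sqrt 35) := by
            simp only [Nmat, Matrix.of_apply]
            rw [if_neg h, if_pos (Or.inr h2), if_pos (by omega)]
          rw [hE, bN, if_pos hP, map_neg, neg_neg, one_div]
        · have hE : Nmat n i j = -(1/7) := by
            simp only [Nmat, Matrix.of_apply]
            rw [if_neg h, if_pos (Or.inr h2), if_neg (by omega)]
          rw [hE, bN, if_neg hP, map_neg, neg_neg]
      · rw [if_neg h2]
        have hE : Nmat n i j = 0 := by
          simp only [Nmat, Matrix.of_apply]
          rw [if_neg h, if_neg (by omega)]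
        rw [hE, map_zero, neg_zero]

lemma tri_aN (n m : ℕ) (h : m ≤ n) :
    tri (aN n) (bN n) (bN n) m = tri aseq bseq bseq m := by
  ext i j
  rw [tri_apply, tri_apply]
  by_cases h1 : (i:ℕ) = (j:ℕ)
  · rw [if_pos h1, if_pos h1]
    have hi : (i:ℕ) < n := lt_of_lt_of_le i.isLt h
    have : ((i:ℕ) = 0 ∨ (i:ℕ) = n) ↔ (i:ℕ) = 0 := by omega
    simp only [aN, aseq, this]
  · rw [if_neg h1, if_neg h1]
    by_cases h2 : (i:ℕ)+1 = (j:ℕ)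
    · rw [if_pos h2, if_pos h2]
      have hj : (j:ℕ) < n := lt_of_lt_of_le j.isLt h
      have : ((i:ℕ) = 0 ∨ (i:ℕ)+1 = n) ↔ (i:ℕ) = 0 := by omega
      simp only [bN, bseq, this]
    · rw [if_neg h2, if_neg h2]
      by_cases h3 : (j:ℕ)+1 = (i:ℕ)
      · rw [if_pos h3, if_pos h3]
        have hi : (i:ℕ) < n := lt_of_lt_of_le i.isLt h
        have : ((j:ℕ) = 0 ∨ (j:ℕ)+1 = n) ↔ (j:ℕ) = 0 := by omega
        simp only [bN, bseq, this]
      · rw [if_neg h3, if_neg h3]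

/-- Writing `det(xI − N) = x^{n+1} + b_1 x^n + ⋯ + b_n x + b_{n+1}`, the coefficient
of `x` satisfies `(−1)^n b_n = (343n+441)/150·[((2+√3)/7)^{n+1} + ((2−√3)/7)^{n+1}]
− (21/50)·[((2+√3)/7)^n + ((2−√3)/7)^n] − (14√3/225)·[((2+√3)/7)^n − ((2−√3)/7)^n]`. -/
theorem neg_one_pow_mul_charpoly_coeff_one_Nmat (n : ℕ) (hn : 2 ≤ n) :
    (-1 : ℝ)^n * (Nmat n).charpoly.coeff 1
      = (343 * (n : ℝ) + 441) / 150
          * (((2 + Real.sqrt 3) / 7)^(n+1) + ((2 - Real.sqrt 3) / 7)^(n+1))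
        - 21/50 * (((2 + Real.sqrt 3) / 7)^n + ((2 - Real.sqrt 3) / 7)^n)
        - 14 * Real.sqrt 3 / 225
          * (((2 + Real.sqrt 3) / 7)^n - ((2 - Real.sqrt 3) / 7)^n) := by
  obtain ⟨j, rfl⟩ : ∃ j, n = j + 2 := ⟨n - 2, by omega⟩
  have hchar : (Nmat (j+2)).charpoly
      = (X - C (3/5)) * ee (j+2) - C (1/35) * ee (j+1) := by
    rw [Matrix.charpoly, charmatrix_Nmat, show (j+2)+1 = (j+1)+2 from rfl, det_tri,
      tri_aN (j+2) (j+2) le_rfl, tri_aN (j+2) (j+1) (by omega),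
      show aN (j+2) (j+2) = X - C (3/5) from by simp [aN],
      show bN (j+2) (j+1) = C ((Real.sqrt 35)⁻¹) from by simp [bN],
      ← ee_def, ← ee_def, ← C_mul, h35]
  have hco : (Nmat (j+2)).charpoly.coeff 1
      = (ee (j+2)).coeff 0 - 3/5 * (ee (j+2)).coeff 1 - 1/35 * (ee (j+1)).coeff 1 := by
    rw [hchar, Polynomial.coeff_sub, coeff1_XsubC_mul, Polynomial.coeff_C_mul]
  obtain ⟨⟨k01, k11⟩, ⟨k02, k12⟩⟩ := key j
  rw [hco, k02, k12, k11]
  have hm : (-1:ℝ)^j * (-1:ℝ)^j = 1 := by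
    rw [← pow_add]
    exact Even.neg_one_pow ⟨j, by omega⟩
  simp only [f0, f1, pow_succ]
  push_cast
  linear_combination
    ( (11/3150) * (((2-Real.sqrt 3)/7)^j + ((2+Real.sqrt 3)/7)^j)
    + (1/150) * (j:ℝ) * (((2-Real.sqrt 3)/7)^j + ((2+Real.sqrt 3)/7)^j)
    + (11/6300) * Real.sqrt 3 * (((2+Real.sqrt 3)/7)^j - ((2-Real.sqrt 3)/7)^j)
    + (1/300) * Real.sqrt 3 * (j:ℝ) * (((2+Real.sqrt 3)/7)^j - ((2-Real.sqrt 3)/7)^j)) * hs3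
    + ( (137/1050) * (((2-Real.sqrt 3)/7)^j + ((2+Real.sqrt 3)/7)^j)
    + (1/30) * (j:ℝ) * (((2-Real.sqrt 3)/7)^j + ((2+Real.sqrt 3)/7)^j)
    + (55/252) * Real.sqrt 3 * (((2+Real.sqrt 3)/7)^j - ((2-Real.sqrt 3)/7)^j)
    + (7/100) * Real.sqrt 3 * (j:ℝ) * (((2+Real.sqrt 3)/7)^j - ((2-Real.sqrt 3)/7)^j)
    + (191/1575) * (Real.sqrt 3)^2 * (((2-Real.sqrt 3)/7)^j + ((2+Real.sqrt 3)/7)^j)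
    + (7/150) * (Real.sqrt 3)^2 * (j:ℝ) * (((2-Real.sqrt 3)/7)^j + ((2+Real.sqrt 3)/7)^j)
    + (47/2100) * (Real.sqrt 3)^3 * (((2+Real.sqrt 3)/7)^j - ((2-Real.sqrt 3)/7)^j)
    + (1/100) * (Real.sqrt 3)^3 * (j:ℝ) * (((2+Real.sqrt 3)/7)^j - ((2-Real.sqrt 3)/7)^j)) * hm
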